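/- Let A, B be positive semi-definite operators on a finite-dimensional real inner product space and let M be an invertible linear operator. Then M·!(A,B)·M* = !(MAM*, MBM*), where !(A,B) := 2A(A+B)⁺B is the parallel-sum (quasi-projection) operator. -/

import Mathlib

/-- `G` is the Moore-Penrose pseudo-inverse of `L` (Penrose conditions;
adjoint-symmetry of `L ∘ G` and `G ∘ L` expressed via `IsSymmetric`). -/
def IsMoorePenrose {V : Type*} [NormedAddCommGroup V] [InnerProductSpace ℝ V]
    (L G : V →ₗ[ℝ] V) : Prop :=
  L ∘ₗ (G ∘ₗ L) = L ∧ G ∘ₗ (L ∘ₗ G) = G ∧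
  (L ∘ₗ G).IsSymmetric ∧ (G ∘ₗ L).IsSymmetric

lemma psd_ker {V : Type*} [NormedAddCommGroup V] [InnerProductSpace ℝ V]
    (A : V →ₗ[ℝ] V) (hA : A.IsSymmetric)
    (hpsd : ∀ x : V, 0 ≤ (inner ℝ x (A x) : ℝ)) {x : V}
    (hx : (inner ℝ x (A x) : ℝ) = 0) : A x = 0 := by
  have key : ∀ t : ℝ, 0 ≤ 2 * t * ‖A x‖^2 + t^2 * (inner ℝ (A x) (A (A x)) : ℝ) := by
    intro t
    have h := hpsd (x + t • A x)
    have h1 : (inner ℝ x (A (A x)) : ℝ) = ‖A x‖^2 := by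
      rw [← hA x (A x), real_inner_self_eq_norm_sq]
    have h2 : (inner ℝ (A x) (A x) : ℝ) = ‖A x‖^2 := real_inner_self_eq_norm_sq _
    simp only [map_add, map_smul, inner_add_left, inner_add_right,
      real_inner_smul_left, real_inner_smul_right] at h
    rw [hx, h1, h2] at h
    nlinarith [h]
  have hd : 0 ≤ (inner ℝ (A x) (A (A x)) : ℝ) := hpsd (A x)
  set c : ℝ := ‖A x‖^2 with hc
  set d : ℝ := (inner ℝ (A x) (A (A x)) : ℝ) with hdd
  have hc0 : 0 ≤ c := by positivity
  have hd1 : (0:ℝ) < d + 1 := by linarith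
  have hkey := key (-(c / (d + 1)))
  have h3 : 0 ≤ (2 * (-(c/(d+1))) * c + (-(c/(d+1)))^2 * d) * (d+1)^2 :=
    mul_nonneg hkey (by positivity)
  have h4 : (2 * (-(c/(d+1))) * c + (-(c/(d+1)))^2 * d) * (d+1)^2 = -(c^2*(d+2)) := by
    field_simp
    ring
  have hcz : c = 0 := by nlinarith
  have : ‖A x‖ = 0 := by
    have := hc ▸ hcz
    nlinarith [norm_nonneg (A x)]
  simpa using this

theorem parallelSum_congruence {V : Type*} [NormedAddCommGroup V] [InnerProductSpace ℝ V]
    [FiniteDimensional ℝ V] (A B : V →ₗ[ℝ] V)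
    (hA : A.IsSymmetric) (hB : B.IsSymmetric)
    (hApsd : ∀ x : V, 0 ≤ (inner ℝ x (A x) : ℝ)) (hBpsd : ∀ x : V, 0 ≤ (inner ℝ x (B x) : ℝ))
    (G : V →ₗ[ℝ] V) (hG : IsMoorePenrose (A + B) G)
    (M : V →ₗ[ℝ] V) (hM : Function.Bijective M)
    (G' : V →ₗ[ℝ] V)
    (hG' : IsMoorePenrose (M ∘ₗ (A ∘ₗ LinearMap.adjoint M) + M ∘ₗ (B ∘ₗ LinearMap.adjoint M)) G') :
    M ∘ₗ (((2 : ℝ) • (A ∘ₗ (G ∘ₗ B))) ∘ₗ LinearMap.adjoint M) =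
      (2 : ℝ) • ((M ∘ₗ (A ∘ₗ LinearMap.adjoint M)) ∘ₗ
        (G' ∘ₗ (M ∘ₗ (B ∘ₗ LinearMap.adjoint M)))) := by
  set N := LinearMap.adjoint M with hN
  set S := A + B with hSdef
  have hSsym : S.IsSymmetric := hA.add hB
  -- kernel inclusions
  have hkerA : ∀ x : V, S x = 0 → A x = 0 := by
    intro x hx
    have hs : (inner ℝ x (S x) : ℝ) = 0 := by rw [hx, inner_zero_right]
    have hsum : (inner ℝ x (A x) : ℝ) + (inner ℝ x (B x) : ℝ) = 0 := by
      simpa [hSdef, inner_add_right] using hs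
    exact psd_ker A hA hApsd (by linarith [hApsd x, hBpsd x])
  have hkerB : ∀ x : V, S x = 0 → B x = 0 := by
    intro x hx
    have hs : (inner ℝ x (S x) : ℝ) = 0 := by rw [hx, inner_zero_right]
    have hsum : (inner ℝ x (A x) : ℝ) + (inner ℝ x (B x) : ℝ) = 0 := by
      simpa [hSdef, inner_add_right] using hs
    exact psd_ker B hB hBpsd (by linarith [hApsd x, hBpsd x])
  -- N is surjective
  have hNinj : Function.Injective N := by
    rw [← LinearMap.ker_eq_bot, LinearMap.ker_eq_bot']
    intro y hy
    have : ∀ z : V, (inner ℝ z y : ℝ) = 0 := by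
      intro z
      obtain ⟨w, rfl⟩ := hM.2 z
      rw [← LinearMap.adjoint_inner_right M, ← hN, hy, inner_zero_right]
    exact inner_self_eq_zero.mp (this y)
  have hNsurj : Function.Surjective N :=
    (LinearMap.injective_iff_surjective).mp hNinj
  -- S' = M ∘ S ∘ N, first Penrose condition for G'
  have hS'eq : M ∘ₗ (A ∘ₗ N) + M ∘ₗ (B ∘ₗ N) = M ∘ₗ (S ∘ₗ N) := by
    ext x; simp [hSdef]
  obtain ⟨hG1, -, -, -⟩ := hG
  obtain ⟨hG'1, -, -, -⟩ := hG'
  rw [hS'eq] at hG'1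
  -- pointwise Penrose 1 facts
  have hSGS : ∀ x : V, S (G (S x)) = S x := fun x => LinearMap.ext_iff.mp hG1 x
  have hSHS : ∀ y : V, S (N (G' (M (S y)))) = S y := by
    intro y
    obtain ⟨x, rfl⟩ := hNsurj y
    have h := LinearMap.ext_iff.mp hG'1 x
    simp only [LinearMap.comp_apply] at h
    exact hM.1 h
  -- A ∘ (X ∘ S) = A for X = G, H
  have hAGS : ∀ x : V, A (G (S x)) = A x := by
    intro x
    have h0 : S (G (S x) - x) = 0 := by rw [map_sub, hSGS, sub_self]
    have := hkerA _ h0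
    rw [map_sub, sub_eq_zero] at this
    exact this
  have hAHS : ∀ x : V, A (N (G' (M (S x)))) = A x := by
    intro x
    have h0 : S (N (G' (M (S x))) - x) = 0 := by rw [map_sub, hSHS, sub_self]
    have := hkerA _ h0
    rw [map_sub, sub_eq_zero] at this
    exact this
  have hBGS : ∀ x : V, B (G (S x)) = B x := by
    intro x
    have h0 : S (G (S x) - x) = 0 := by rw [map_sub, hSGS, sub_self]
    have := hkerB _ h0
    rw [map_sub, sub_eq_zero] at this
    exact this
  -- factorization B = S ∘ (G* ∘ B)
  have hBcomp : B ∘ₗ (G ∘ₗ S) = B := LinearMap.ext fun x => hBGS x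
  have hSadj : LinearMap.adjoint S = S := (LinearMap.isSymmetric_iff_isSelfAdjoint S).mp hSsym
  have hBadj : LinearMap.adjoint B = B := (LinearMap.isSymmetric_iff_isSelfAdjoint B).mp hB
  have hBSC : (S ∘ₗ (LinearMap.adjoint G)) ∘ₗ B = B := by
    have := congrArg LinearMap.adjoint hBcomp
    rwa [LinearMap.adjoint_comp, LinearMap.adjoint_comp, hSadj, hBadj] at this
  have hBSC' : ∀ x : V, S ((LinearMap.adjoint G) (B x)) = B x := fun x =>
    LinearMap.ext_iff.mp hBSC x
  -- core identity
  have hcore : ∀ z : V, A (G (B z)) = A (N (G' (M (B z)))) := by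
    intro z
    rw [← hBSC' z, hAGS, hAHS]
  -- finish
  ext x
  simp only [LinearMap.comp_apply, LinearMap.smul_apply, LinearMap.smul_comp,
    LinearMap.comp_smul, map_smul]
  rw [hcore (N x)]
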